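/- For all real u > 0 and c > 0, | ∫₀^{2π} 1/(u + (c/2)(t − π)²) dt − π·√(2/(u c)) | ≤ 4/(π c). In particular, (1/2π)∫₀^{2π} 1/(u + (c/2)(t − π)²) dt = 1/√(2 u c) + O(1) uniformly as u → 0⁺. -/

import Mathlib

open Real MeasureTheory

lemma my_arctan_le_self {x : ℝ} (hx : 0 ≤ x) : Real.arctan x ≤ x := by
  calc Real.arctan x ≤ Real.tan (Real.arctan x) := by
        apply Real.le_tan
        · by_cases h : x = 0
          · simp [h]
          · exact le_of_lt (by
              have : (0:ℝ) = Real.arctan 0 := Real.arctan_zero.symm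
              rw [this]
              exact Real.arctan_strictMono (lt_of_le_of_ne hx (Ne.symm h)))
        · exact Real.arctan_lt_pi_div_two x
    _ = x := Real.tan_arctan x

set_option maxHeartbeats 1000000 in
/-- For all real `u > 0` and `c > 0`,
`|∫₀^{2π} 1/(u + (c/2)(t − π)²) dt − π·√(2/(uc))| ≤ 4/(πc)`. In particular,
`(1/2π)∫₀^{2π} 1/(u + (c/2)(t − π)²) dt = 1/√(2uc) + O(1)` uniformly as `u → 0⁺`. -/
theorem singular_part_estimate (u c : ℝ) (hu : 0 < u) (hc : 0 < c) :
    |(∫ t in (0:ℝ)..(2 * π), 1 / (u + (c / 2) * (t - π) ^ 2)) -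
        π * Real.sqrt (2 / (u * c))| ≤ 4 / (π * c) ∧
    |(1 / (2 * π)) * (∫ t in (0:ℝ)..(2 * π), 1 / (u + (c / 2) * (t - π) ^ 2)) -
        1 / Real.sqrt (2 * u * c)| ≤ 2 / (π ^ 2 * c) := by
  have hπ := Real.pi_pos
  set I := (∫ t in (0:ℝ)..(2 * π), 1 / (u + (c / 2) * (t - π) ^ 2)) with hI_def
  set a := Real.sqrt (c / (2 * u)) with ha_def
  set s := Real.sqrt (2 / (u * c)) with hs_def
  have ha : 0 < a := Real.sqrt_pos.mpr (by positivity)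
  have hs : 0 < s := Real.sqrt_pos.mpr (by positivity)
  have ha2 : a ^ 2 = c / (2 * u) := Real.sq_sqrt (by positivity)
  have hs2 : s ^ 2 = 2 / (u * c) := Real.sq_sqrt (by positivity)
  have hsa : s * a = 1 / u := by
    have h1 : (s * a) ^ 2 = (1 / u) ^ 2 := by
      rw [mul_pow, ha2, hs2]; field_simp
    nlinarith [mul_pos hs ha, one_div_pos.mpr hu]
  have hsdiva : s / a = 2 / c := by
    have h1 : s / a = s * a / a ^ 2 := by field_simp
    rw [h1, hsa, ha2]; field_simp
  -- compute the integral
  have hderiv : ∀ t ∈ Set.uIcc (0:ℝ) (2 * π),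
      HasDerivAt (fun t => s * Real.arctan (a * (t - π)))
        (1 / (u + (c / 2) * (t - π) ^ 2)) t := by
    intro t _
    have h1 : HasDerivAt (fun t : ℝ => a * (t - π)) a t := by
      simpa using ((hasDerivAt_id t).sub_const π).const_mul a
    have h2 := (Real.hasDerivAt_arctan (a * (t - π))).comp t h1
    have h3 := h2.const_mul s
    refine h3.congr_deriv ?_; symm
    have hden : u + (c / 2) * (t - π) ^ 2 = u * (1 + (a * (t - π)) ^ 2) := by
      rw [mul_pow, ha2]; field_simp
    have hX : (0:ℝ) < 1 + (a * (t - π)) ^ 2 := by positivity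
    rw [hden, show s * (1 / (1 + (a * (t - π)) ^ 2) * a)
        = s * a * (1 / (1 + (a * (t - π)) ^ 2)) from by ring, hsa]
    field_simp
  have hintg : IntervalIntegrable (fun t => 1 / (u + (c / 2) * (t - π) ^ 2))
      volume 0 (2 * π) := by
    apply Continuous.intervalIntegrable
    apply Continuous.div continuous_const
    · continuity
    · intro t; positivity
  have hI : I = 2 * s * Real.arctan (a * π) := by
    rw [hI_def, intervalIntegral.integral_eq_sub_of_hasDerivAt hderiv hintg]
    have h0 : a * ((0:ℝ) - π) = -(a * π) := by ring
    have h2 : a * (2 * π - π) = a * π := by ring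
    rw [h0, h2, Real.arctan_neg]; ring
  clear_value a s I
  -- key estimate
  have haπ : 0 < a * π := mul_pos ha hπ
  have harct : Real.arctan ((a * π)⁻¹) = π / 2 - Real.arctan (a * π) :=
    Real.arctan_inv_of_pos haπ
  have hdiff : I - π * s = -(2 * s * Real.arctan ((a * π)⁻¹)) := by
    rw [hI, harct]; ring
  have harc_nonneg : 0 ≤ Real.arctan ((a * π)⁻¹) := by
    rw [show (0:ℝ) = Real.arctan 0 from Real.arctan_zero.symm]
    exact Real.arctan_strictMono.monotone (by positivity)
  have harc_le : Real.arctan ((a * π)⁻¹) ≤ (a * π)⁻¹ :=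
    my_arctan_le_self (by positivity)
  have hbound : |I - π * s| ≤ 4 / (π * c) := by
    rw [hdiff, abs_neg, abs_of_nonneg (by positivity)]
    have h1 : 2 * s * Real.arctan ((a * π)⁻¹) ≤ 2 * s * (a * π)⁻¹ := by
      nlinarith
    have h2 : 2 * s * (a * π)⁻¹ = 4 / (π * c) := by
      have h3 : 2 * s * (a * π)⁻¹ = 2 * (s / a) / π := by
        field_simp
      rw [h3, hsdiva]; field_simp; ring
    linarith
  refine ⟨hbound, ?_⟩
  have hroot : 1 / Real.sqrt (2 * u * c) = s / 2 := by
    have h1 : Real.sqrt (2 * u * c) = 2 / s := by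
      rw [eq_div_iff hs.ne']
      have h2 : (Real.sqrt (2 * u * c) * s) ^ 2 = 2 ^ 2 := by
        rw [mul_pow, Real.sq_sqrt (by positivity : (0:ℝ) ≤ 2 * u * c), hs2]
        field_simp
      nlinarith [mul_pos (Real.sqrt_pos.mpr (by positivity : (0:ℝ) < 2 * u * c)) hs]
    rw [h1]; field_simp
  rw [hroot]
  have heq : (1 / (2 * π)) * I - s / 2 = (I - π * s) / (2 * π) := by
    field_simp
  rw [heq, abs_div, abs_of_pos (by positivity : (0:ℝ) < 2 * π),
    div_le_iff₀ (by positivity : (0:ℝ) < 2 * π)]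
  calc |I - π * s| ≤ 4 / (π * c) := hbound
    _ = 2 / (π ^ 2 * c) * (2 * π) := by field_simp; ring
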